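/- Let H = (V, E′) be a star forest of a graph G and let P be an alternating path of type II or III with respect to H. Then H′ = (V, E′ Δ P) is again a star forest of G with the same set of leaves as H (where Δ denotes symmetric difference of edge sets). -/

import Mathlib

/-- The graph determined by a "center" assignment: each non-fixed vertex `v` is joined
exactly to its center `c v`. -/
def forestGraph {V : Type*} (c : V → V) : SimpleGraph V where
  Adj v w := v ≠ w ∧ (c v = w ∨ c w = v)
  symm := by constructor; intro v w h; exact ⟨Ne.symm h.1, h.2.symm⟩
  loopless := by constructor; intro v h; exact h.1 rfl

/-- A star forest of `G`: a spanning subgraph of `G` each of whose components is a star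
`K_{1,ℓ}` with `ℓ ≥ 1`, encoded by assigning to every vertex the center of its star
(centers are fixed points; every star has at least one leaf). -/
structure StarForest {V : Type*} (G : SimpleGraph V) where
  center : V → V
  idem : ∀ v, center (center v) = center v
  sub : forestGraph center ≤ G
  spanning : ∀ v, center v = v → ∃ w, center w = v ∧ w ≠ v

/-- The leaves of a star forest. -/
def StarForest.leaves {V : Type*} {G : SimpleGraph V} (F : StarForest G) : Set V :=
  {v | F.center v ≠ v}

/-- The number of vertices of the star with center `c` (so a star `S_ℓ` has size `ℓ+1`). -/
noncomputable def StarForest.size {V : Type*} {G : SimpleGraph V} (F : StarForest G)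
    (c : V) : ℕ :=
  Set.ncard {v | F.center v = c}

/-- An alternating path visiting the distinct stars `C_1, …, C_k` of the star forest `F`:
`c i` is the center of `C_i` and, for `2 ≤ i ≤ k`, `lf i` is a leaf of `C_i`; consecutive
stars are joined by a `G`-edge from the center of `C_i` to the leaf `lf (i+1)` of
`C_{i+1}` that is not a forest edge, while the edges from each `lf i` to its center `c i`
are forest edges. -/
structure AltPath {V : Type*} {G : SimpleGraph V} (F : StarForest G) (k : ℕ) where
  c : ℕ → V
  lf : ℕ → V
  hk : 2 ≤ k
  hc : ∀ i, 1 ≤ i → i ≤ k → F.center (c i) = c i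
  hinj : ∀ i j, 1 ≤ i → i ≤ k → 1 ≤ j → j ≤ k → c i = c j → i = j
  hlf : ∀ i, 2 ≤ i → i ≤ k → F.center (lf i) = c i ∧ lf i ≠ c i
  hG : ∀ i, 1 ≤ i → i < k → G.Adj (c i) (lf (i + 1))
  hnotF : ∀ i, 1 ≤ i → i < k → ¬ (forestGraph F.center).Adj (c i) (lf (i + 1))

/-- The edge set of an alternating path: the forest edges `{lf i, c i}` (`2 ≤ i ≤ k`)
and the non-forest edges `{c i, lf (i+1)}` (`1 ≤ i ≤ k−1`). -/
def AltPath.edges {V : Type*} {G : SimpleGraph V} {F : StarForest G} {k : ℕ}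
    (P : AltPath F k) : Set (Sym2 V) :=
  {e | ∃ i, 2 ≤ i ∧ i ≤ k ∧ e = s(P.lf i, P.c i)} ∪
  {e | ∃ i, 1 ≤ i ∧ i < k ∧ e = s(P.c i, P.lf (i + 1))}

/-- Alternating path of type II: `C_1 ≅ S_1`, intermediate stars `≅ S_2`, and
`C_k ≅ S_ℓ` with `ℓ ≥ 3`. -/
def AltPath.IsTypeII {V : Type*} {G : SimpleGraph V} {F : StarForest G} {k : ℕ}
    (P : AltPath F k) : Prop :=
  F.size (P.c 1) = 2 ∧ (∀ i, 2 ≤ i → i < k → F.size (P.c i) = 3) ∧ 4 ≤ F.size (P.c k)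

/-- Alternating path of type III: `C_1 ≅ S_2`, intermediate stars `≅ S_3`, and
`C_k ≅ S_ℓ` with `ℓ ≥ 4`. -/
def AltPath.IsTypeIII {V : Type*} {G : SimpleGraph V} {F : StarForest G} {k : ℕ}
    (P : AltPath F k) : Prop :=
  F.size (P.c 1) = 3 ∧ (∀ i, 2 ≤ i → i < k → F.size (P.c i) = 4) ∧ 5 ≤ F.size (P.c k)

section Aux

variable {V : Type*} {G : SimpleGraph V} {F : StarForest G} {k : ℕ} (P : AltPath F k)

lemma AltPath.lf_inj {i j : ℕ} (hi1 : 2 ≤ i) (hi2 : i ≤ k) (hj1 : 2 ≤ j) (hj2 : j ≤ k)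
    (h : P.lf i = P.lf j) : i = j := by
  have h1 := (P.hlf i hi1 hi2).1
  have h2 := (P.hlf j hj1 hj2).1
  exact P.hinj i j (by omega) hi2 (by omega) hj2 (by rw [← h1, ← h2, h])

lemma AltPath.lf_ne_c {i j : ℕ} (hi1 : 2 ≤ i) (hi2 : i ≤ k) (hj1 : 1 ≤ j) (hj2 : j ≤ k) :
    P.lf i ≠ P.c j := by
  intro h
  have h1 := (P.hlf i hi1 hi2).1
  have h2 : P.c i = P.c j := by rw [← h1, h, P.hc j hj1 hj2]
  have := P.hinj i j (by omega) hi2 hj1 hj2 h2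
  subst this
  exact (P.hlf i hi1 hi2).2 h

open Classical in
/-- The new center assignment after switching along the path: each path leaf `lf i`
is reattached to the previous center `c (i-1)`; everything else is unchanged. -/
noncomputable def AltPath.newCenter : V → V := fun v =>
  if h : ∃ i, 2 ≤ i ∧ i ≤ k ∧ v = P.lf i then P.c (Classical.choose h - 1)
  else F.center v

lemma AltPath.newCenter_lf {i : ℕ} (hi1 : 2 ≤ i) (hi2 : i ≤ k) :
    P.newCenter (P.lf i) = P.c (i - 1) := by
  have h : ∃ j, 2 ≤ j ∧ j ≤ k ∧ P.lf i = P.lf j := ⟨i, hi1, hi2, rfl⟩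
  have hs := Classical.choose_spec h
  have : Classical.choose h = i :=
    (P.lf_inj hi1 hi2 hs.1 hs.2.1 hs.2.2).symm
  unfold AltPath.newCenter
  rw [dif_pos h, this]

lemma AltPath.newCenter_not_lf {v : V} (h : ¬ ∃ i, 2 ≤ i ∧ i ≤ k ∧ v = P.lf i) :
    P.newCenter v = F.center v := dif_neg h

lemma AltPath.center_not_lf {v : V} :
    ¬ ∃ i, 2 ≤ i ∧ i ≤ k ∧ F.center v = P.lf i := by
  rintro ⟨i, h1, h2, h3⟩
  have := (P.hlf i h1 h2).1
  have h4 : F.center (F.center v) = F.center v := F.idem v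
  rw [h3, this] at h4
  exact (P.hlf i h1 h2).2 h4.symm

lemma AltPath.c_not_lf {j : ℕ} (hj1 : 1 ≤ j) (hj2 : j ≤ k) :
    ¬ ∃ i, 2 ≤ i ∧ i ≤ k ∧ P.c j = P.lf i := by
  rintro ⟨i, h1, h2, h3⟩
  exact P.lf_ne_c h1 h2 hj1 hj2 h3.symm

lemma mem_forestGraph_edgeSet (c : V → V) (e : Sym2 V) :
    e ∈ (forestGraph c).edgeSet ↔ ∃ v, c v ≠ v ∧ e = s(v, c v) := by
  induction e using Sym2.ind with
  | _ a b =>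
    rw [SimpleGraph.mem_edgeSet]
    constructor
    · rintro ⟨hne, h | h⟩
      · exact ⟨a, by rw [h]; exact hne.symm, by rw [h]⟩
      · exact ⟨b, by rw [h]; exact hne, by rw [h, Sym2.eq_swap]⟩
    · rintro ⟨v, hv, he⟩
      rcases Sym2.eq_iff.mp he with ⟨h1, h2⟩ | ⟨h1, h2⟩
      · subst h1; subst h2; exact ⟨Ne.symm hv, Or.inl rfl⟩
      · subst h1; subst h2; exact ⟨hv, Or.inr rfl⟩

end Aux

set_option maxHeartbeats 1000000 in
/-- Switching a star forest along an alternating path of type II or III (taking the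
symmetric difference of the forest edges with the path edges) yields again a star forest
of `G` with the same set of leaves. -/
theorem starForest_symmDiff_altPath {V : Type*} (G : SimpleGraph V)
    (F : StarForest G) (k : ℕ) (P : AltPath F k)
    (hP : P.IsTypeII ∨ P.IsTypeIII) :
    ∃ F' : StarForest G,
      (forestGraph F'.center).edgeSet =
        symmDiff (forestGraph F.center).edgeSet P.edges ∧
      F'.leaves = F.leaves := by
  classical
  have hk := P.hk
  -- idempotence
  have hidem : ∀ v, P.newCenter (P.newCenter v) = P.newCenter v := by
    intro v
    by_cases h : ∃ i, 2 ≤ i ∧ i ≤ k ∧ v = P.lf i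
    · obtain ⟨i, h1, h2, rfl⟩ := h
      rw [P.newCenter_lf h1 h2, P.newCenter_not_lf (P.c_not_lf (by omega) (by omega)),
        P.hc (i - 1) (by omega) (by omega)]
    · rw [P.newCenter_not_lf h, P.newCenter_not_lf P.center_not_lf, F.idem]
  -- subgraph
  have haux : ∀ v w : V, v ≠ w → P.newCenter v = w → G.Adj v w := by
    intro v w hne hw
    by_cases h : ∃ i, 2 ≤ i ∧ i ≤ k ∧ v = P.lf i
    · obtain ⟨i, h1, h2, rfl⟩ := h
      rw [P.newCenter_lf h1 h2] at hw
      subst hw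
      have := P.hG (i - 1) (by omega) (by omega)
      rw [show i - 1 + 1 = i by omega] at this
      exact this.symm
    · rw [P.newCenter_not_lf h] at hw
      exact F.sub ⟨hne, Or.inl hw⟩
  have hsub : forestGraph P.newCenter ≤ G := by
    intro v w hvw
    rcases hvw.2 with h | h
    · exact haux v w hvw.1 h
    · exact (haux w v hvw.1.symm h).symm
  -- fixed points of P.newCenter are exactly fixed points of F.center
  have hfix : ∀ v, P.newCenter v = v ↔ F.center v = v := by
    intro v
    by_cases h : ∃ i, 2 ≤ i ∧ i ≤ k ∧ v = P.lf i
    · obtain ⟨i, h1, h2, rfl⟩ := h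
      rw [P.newCenter_lf h1 h2, (P.hlf i h1 h2).1]
      constructor
      · intro hx; exact absurd hx.symm (P.lf_ne_c h1 h2 (by omega) (by omega))
      · intro hx; exact absurd hx.symm (P.lf_ne_c h1 h2 (by omega) h2)
    · rw [P.newCenter_not_lf h]
  -- spanning
  have hspan : ∀ v, P.newCenter v = v → ∃ w, P.newCenter w = v ∧ w ≠ v := by
    intro v hv
    have hfv : F.center v = v := (hfix v).mp hv
    by_cases hc : ∃ j, 1 ≤ j ∧ j ≤ k ∧ v = P.c j
    · obtain ⟨j, hj1, hj2, rfl⟩ := hc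
      by_cases hjk : j < k
      · refine ⟨P.lf (j + 1), ?_, (P.lf_ne_c (by omega) (by omega) hj1 hj2)⟩
        rw [P.newCenter_lf (by omega) (by omega)]
        simp
      · have hjek : k = j := by omega
        subst hjek
        have h4 : 4 ≤ F.size (P.c k) := by
          rcases hP with h | h
          · exact h.2.2
          · exact le_trans (by norm_num) h.2.2
        have h3 : ∃ w, F.center w = P.c k ∧ w ≠ P.c k ∧ w ≠ P.lf k := by
          by_contra hcon
          push_neg at hcon
          have hsubS : {w | F.center w = P.c k} ⊆ {P.c k, P.lf k} := by
            intro w hw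
            by_cases hwc : w = P.c k
            · exact Or.inl hwc
            · exact Or.inr (hcon w hw hwc)
          have hle := Set.ncard_le_ncard hsubS
            (Set.Finite.insert _ (Set.finite_singleton _))
          have hle2 : Set.ncard ({P.c k, P.lf k} : Set V) ≤ 2 :=
            le_trans (Set.ncard_insert_le _ _) (by simp)
          have : F.size (P.c k) ≤ 2 := le_trans hle hle2
          rw [StarForest.size] at h4
          rw [StarForest.size] at this
          omega
        obtain ⟨w, hw1, hw2, hw3⟩ := h3
        refine ⟨w, ?_, hw2⟩
        have hwl : ¬ ∃ i, 2 ≤ i ∧ i ≤ k ∧ w = P.lf i := by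
          rintro ⟨i, h1, h2, rfl⟩
          have := (P.hlf i h1 h2).1
          rw [this] at hw1
          have := P.hinj i k (by omega) h2 (by omega) (le_refl k) hw1
          subst this
          exact hw3 rfl
        rw [P.newCenter_not_lf hwl, hw1]
    · obtain ⟨w, hw1, hw2⟩ := F.spanning v hfv
      refine ⟨w, ?_, hw2⟩
      have hwl : ¬ ∃ i, 2 ≤ i ∧ i ≤ k ∧ w = P.lf i := by
        rintro ⟨i, h1, h2, rfl⟩
        exact hc ⟨i, by omega, h2, ((P.hlf i h1 h2).1.symm.trans hw1).symm⟩
      rw [P.newCenter_not_lf hwl, hw1]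
  refine ⟨⟨P.newCenter, hidem, hsub, hspan⟩, ?_, ?_⟩
  · -- edge set equality
    ext e
    simp only [mem_forestGraph_edgeSet, Set.mem_symmDiff, AltPath.edges,
      Set.mem_union, Set.mem_setOf_eq]
    have hAO : (∃ i, 2 ≤ i ∧ i ≤ k ∧ e = s(P.lf i, P.c i)) →
        (∃ v, F.center v ≠ v ∧ e = s(v, F.center v)) := by
      rintro ⟨i, h1, h2, rfl⟩
      refine ⟨P.lf i, ?_, ?_⟩
      · rw [(P.hlf i h1 h2).1]; exact Ne.symm (P.hlf i h1 h2).2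
      · rw [(P.hlf i h1 h2).1]
    have hBO : (∃ i, 1 ≤ i ∧ i < k ∧ e = s(P.c i, P.lf (i + 1))) →
        ¬ (∃ v, F.center v ≠ v ∧ e = s(v, F.center v)) := by
      rintro ⟨i, h1, h2, rfl⟩ ⟨v, hv, he⟩
      rcases Sym2.eq_iff.mp he with ⟨ha, hb⟩ | ⟨ha, hb⟩
      · subst ha
        rw [P.hc i h1 (by omega)] at hb
        exact (P.lf_ne_c (by omega) (by omega) h1 (by omega)) hb
      · subst hb
        rw [(P.hlf (i + 1) (by omega) (by omega)).1] at ha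
        have := P.hinj i (i + 1) h1 (by omega) (by omega) (by omega) ha
        omega
    have hmain : (∃ v, P.newCenter v ≠ v ∧ e = s(v, P.newCenter v)) ↔
        ((∃ v, F.center v ≠ v ∧ e = s(v, F.center v)) ∧
          ¬ (∃ i, 2 ≤ i ∧ i ≤ k ∧ e = s(P.lf i, P.c i))) ∨
        (∃ i, 1 ≤ i ∧ i < k ∧ e = s(P.c i, P.lf (i + 1))) := by
      constructor
      · rintro ⟨v, hv, rfl⟩
        by_cases h : ∃ i, 2 ≤ i ∧ i ≤ k ∧ v = P.lf i
        · obtain ⟨i, h1, h2, rfl⟩ := h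
          right
          refine ⟨i - 1, by omega, by omega, ?_⟩
          rw [show i - 1 + 1 = i by omega, P.newCenter_lf h1 h2, Sym2.eq_swap]
        · left
          rw [P.newCenter_not_lf h] at hv ⊢
          refine ⟨⟨v, hv, rfl⟩, ?_⟩
          rintro ⟨i, h1, h2, he⟩
          rcases Sym2.eq_iff.mp he with ⟨ha, hb⟩ | ⟨ha, hb⟩
          · exact h ⟨i, h1, h2, ha⟩
          · subst ha
            rw [P.hc i (by omega) h2] at hb
            exact (P.hlf i h1 h2).2 hb.symm
      · rintro (⟨⟨v, hv, rfl⟩, hA⟩ | ⟨i, h1, h2, rfl⟩)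
        · have h : ¬ ∃ i, 2 ≤ i ∧ i ≤ k ∧ v = P.lf i := by
            rintro ⟨i, hi1, hi2, rfl⟩
            exact hA ⟨i, hi1, hi2, by rw [(P.hlf i hi1 hi2).1]⟩
          exact ⟨v, by rw [P.newCenter_not_lf h]; exact hv,
            by rw [P.newCenter_not_lf h]⟩
        · refine ⟨P.lf (i + 1), ?_, ?_⟩
          · rw [P.newCenter_lf (by omega) (by omega)]
            simp only [Nat.add_sub_cancel]
            exact Ne.symm (P.lf_ne_c (by omega) (by omega) h1 (by omega))
          · rw [P.newCenter_lf (by omega) (by omega)]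
            simp only [Nat.add_sub_cancel]
            exact Sym2.eq_swap
    have key : ∀ N O A B : Prop, (A → O) → (B → ¬ O) → (N ↔ (O ∧ ¬ A) ∨ B) →
        (N ↔ (O ∧ ¬ (A ∨ B)) ∨ ((A ∨ B) ∧ ¬ O)) := by tauto
    exact key _ _ _ _ hAO hBO hmain
  · -- leaves
    ext v
    simp only [StarForest.leaves, Set.mem_setOf_eq]
    exact not_congr (hfix v)
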